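/- Once the outputs are stabilized (η ≡ 0, so all converter voltages equal and bus voltage constant), each zero-dynamics coordinate z_j = R_j i_{t_j} − R_{j+1} i_{t_{j+1}} evolves as ż_j = −((R_j + R_{j+1})/(L_j + L_{j+1}))·z_j·μ_j for a positive constant μ_j depending on the parameters; in particular z_j(t) → 0 exponentially with rate determined by −(R_j + R_{j+1})/(L_j + L_{j+1}). -/

import Mathlib

open Filter

lemma linear_ode_sol (R L w : ℝ) (hL : 0 < L) (f : ℝ → ℝ)
    (hf : ∀ t, HasDerivAt f ((w - R * f t) / L) t) :
    ∀ t, R * f t - w = (R * f 0 - w) * Real.exp (-(R / L) * t) := by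
  have key : ∀ t, (R * f t - w) * Real.exp ((R / L) * t)
      = (R * f 0 - w) * Real.exp ((R / L) * 0) := by
    have hdiff : ∀ t, HasDerivAt (fun s => (R * f s - w) * Real.exp ((R / L) * s)) 0 t := by
      intro t
      have hd1 : HasDerivAt (fun s => R * f s - w) (R * ((w - R * f t) / L)) t :=
        ((hf t).const_mul R).sub_const w
      have hd2 : HasDerivAt (fun s => Real.exp ((R / L) * s))
          (Real.exp ((R / L) * t) * (R / L)) t := by
        simpa [mul_comm] using ((hasDerivAt_id t).const_mul (R / L)).exp
      have := hd1.mul hd2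
      refine this.congr_deriv ?_
      ring
    intro t
    exact is_const_of_deriv_eq_zero (fun x => (hdiff x).differentiableAt)
      (fun x => (hdiff x).deriv) t 0
  intro t
  have h := key t
  have he : Real.exp ((R / L) * t) ≠ 0 := Real.exp_ne_zero _
  have : R * f t - w = (R * f 0 - w) * Real.exp ((R / L) * 0) / Real.exp ((R / L) * t) := by
    field_simp at h ⊢
    linarith [h]
  rw [this]
  rw [div_eq_mul_inv, ← Real.exp_neg]
  rw [mul_assoc, ← Real.exp_add]
  ring_nf

/-- on the zero-dynamics manifold (all converter voltages equal
to v, bus voltage v_L constant), z = R₁ i_{t₁} − R₂ i_{t₂} satisfies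
ż = (R₁/L₁)(v − v_L − R₁ i_{t₁}) − (R₂/L₂)(v − v_L − R₂ i_{t₂}), and z(t) → 0
exponentially with rate −((R₁+R₂)/(L₁+L₂))·μ for some constant μ > 0. -/
theorem zero_dynamics_exponentially_stable
    (R₁ R₂ L₁ L₂ v vL : ℝ)
    (hR₁ : 0 < R₁) (hR₂ : 0 < R₂) (hL₁ : 0 < L₁) (hL₂ : 0 < L₂)
    (it₁ it₂ : ℝ → ℝ)
    (h₁ : ∀ t, HasDerivAt it₁ ((v - R₁ * it₁ t - vL) / L₁) t)
    (h₂ : ∀ t, HasDerivAt it₂ ((v - R₂ * it₂ t - vL) / L₂) t) :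
    (∀ t, HasDerivAt (fun s => R₁ * it₁ s - R₂ * it₂ s)
      ((R₁ / L₁) * (v - vL - R₁ * it₁ t)
        - (R₂ / L₂) * (v - vL - R₂ * it₂ t)) t) ∧
    (∃ μ > (0 : ℝ), ∃ M ≥ (0 : ℝ), ∀ t ≥ (0 : ℝ),
      |R₁ * it₁ t - R₂ * it₂ t| ≤
        M * Real.exp (-((R₁ + R₂) / (L₁ + L₂)) * μ * t)) := by
  constructor
  · intro t
    have := ((h₁ t).const_mul R₁).sub ((h₂ t).const_mul R₂)
    refine this.congr_deriv ?_
    ring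
  · set w := v - vL with hw
    have e₁ := linear_ode_sol R₁ L₁ w hL₁ it₁ (by intro t; convert h₁ t using 2; ring)
    have e₂ := linear_ode_sol R₂ L₂ w hL₂ it₂ (by intro t; convert h₂ t using 2; ring)
    set a₁ := R₁ / L₁
    set a₂ := R₂ / L₂
    have ha₁ : 0 < a₁ := div_pos hR₁ hL₁
    have ha₂ : 0 < a₂ := div_pos hR₂ hL₂
    set α := min a₁ a₂ with hα
    have hαpos : 0 < α := lt_min ha₁ ha₂
    set μ := α * (L₁ + L₂) / (R₁ + R₂) with hμ
    have hμpos : 0 < μ := div_pos (mul_pos hαpos (by linarith)) (by linarith)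
    refine ⟨μ, hμpos, |R₁ * it₁ 0 - w| + |R₂ * it₂ 0 - w|,
      by positivity, fun t ht => ?_⟩
    have hrate : -((R₁ + R₂) / (L₁ + L₂)) * μ = -α := by
      field_simp [hμ]
      have hRs : R₁ + R₂ ≠ 0 := by positivity
      rw [hμ]
      field_simp
    rw [hrate]
    have hz : R₁ * it₁ t - R₂ * it₂ t
        = (R₁ * it₁ 0 - w) * Real.exp (-a₁ * t)
          - (R₂ * it₂ 0 - w) * Real.exp (-a₂ * t) := by
      have := e₁ t
      have := e₂ t
      linarith
    rw [hz]
    have hb₁ : Real.exp (-a₁ * t) ≤ Real.exp (-α * t) :=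
      Real.exp_le_exp.2 (by nlinarith [min_le_left a₁ a₂])
    have hb₂ : Real.exp (-a₂ * t) ≤ Real.exp (-α * t) :=
      Real.exp_le_exp.2 (by nlinarith [min_le_right a₁ a₂])
    calc |(R₁ * it₁ 0 - w) * Real.exp (-a₁ * t)
          - (R₂ * it₂ 0 - w) * Real.exp (-a₂ * t)|
        ≤ |(R₁ * it₁ 0 - w) * Real.exp (-a₁ * t)|
          + |(R₂ * it₂ 0 - w) * Real.exp (-a₂ * t)| := abs_sub _ _
      _ = |R₁ * it₁ 0 - w| * Real.exp (-a₁ * t)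
          + |R₂ * it₂ 0 - w| * Real.exp (-a₂ * t) := by
          rw [abs_mul, abs_mul, abs_of_pos (Real.exp_pos _), abs_of_pos (Real.exp_pos _)]
      _ ≤ (|R₁ * it₁ 0 - w| + |R₂ * it₂ 0 - w|) * Real.exp (-α * t) := by
          have := abs_nonneg (R₁ * it₁ 0 - w)
          have := abs_nonneg (R₂ * it₂ 0 - w)
          nlinarith
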